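/- arXiv:1405.4745 — 3 statements merged into one kernel-verified Lean document; each statement's English description precedes it below -/
import Mathlib

section
/- Let σ be a permutation of the finite set {0,1}^p with support A ⊆ {0,1}^p. Define √σ : {0,1}^{p+1} → {0,1}^{p+1} by √σ(s⌢ε) = s⌢1 if s ∈ A and ε = 0, √σ(s⌢ε) = σ(s)⌢0 if s ∈ A and ε = 1, and √σ(s⌢ε) = s⌢ε if s ∉ A. Then √σ is a permutation of {0,1}^{p+1}, (√σ)² equals the permutation of {0,1}^{p+1} given by (x₁,...,x_{p+1}) ↦ (σ(x₁,...,x_p), x_{p+1}), and the support of √σ equals {s⌢ε : s ∈ A, ε ∈ {0,1}}. -/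
open Classical in
/-- The square root of a dyadic permutation: it is a permutation of `{0,1}^{p+1}`,
its square is `σ × id`, and its support is `A × {0,1}` where `A` is the support of `σ`. -/
theorem sqrt_perm_spec (p : ℕ) (σ : Equiv.Perm (Fin p → Bool)) :
    ∀ A : Set (Fin p → Bool), A = {s | σ s ≠ s} →
    ∀ f : (Fin p → Bool) × Bool → (Fin p → Bool) × Bool,
      (f = fun q => if q.1 ∈ A then
          (if q.2 = false then (q.1, true) else (σ q.1, false)) else q) →
      Function.Bijective f ∧
      (∀ q, f (f q) = (σ q.1, q.2)) ∧
      {q | f q ≠ q} = {q : (Fin p → Bool) × Bool | q.1 ∈ A} := by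
  intro A hA f hf
  have hAσ : ∀ s, s ∈ A → σ s ∈ A := by
    intro s hs
    rw [hA] at hs ⊢
    simpa using fun h => hs (σ.injective h)
  have hsq : ∀ q, f (f q) = (σ q.1, q.2) := by
    intro ⟨s, b⟩
    by_cases hs : s ∈ A
    · cases b
      · simp [hf, hs]
      · simp [hf, hs, hAσ s hs]
    · have hσs : σ s = s := by
        by_contra h
        exact hs (hA ▸ h)
      simp [hf, hs, hσs]
  refine ⟨?_, hsq, ?_⟩
  · constructor
    · intro a b hab
      have := hsq a
      rw [hab, hsq b] at this
      exact Prod.ext (σ.injective (congrArg Prod.fst this).symm ▸ rfl)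
        (congrArg Prod.snd this).symm
    · intro y
      exact ⟨f (σ.symm y.1, y.2), by simp [hsq]⟩
  · ext ⟨s, b⟩
    simp only [Set.mem_setOf_eq]
    constructor
    · intro h
      by_contra hs
      exact h (by simp [hf, hs])
    · intro hs
      cases b <;> simp [hf, hs]
end

section
/- Let G be a topological group that is n-Steinhaus for some fixed n ∈ ℕ: for every symmetric subset A ∋ 1 of G such that countably many left translates of A cover G, the set Aⁿ contains a neighborhood of the identity. Then every group homomorphism from G into a separable topological group is continuous. -/
open Pointwise

private lemma sym_open_pow_subset {H : Type*} [Group H] [TopologicalSpace H]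
    [IsTopologicalGroup H] (m : ℕ) {W : Set H} (hW : W ∈ nhds 1) :
    ∃ V : Set H, IsOpen V ∧ (1 : H) ∈ V ∧ V = V⁻¹ ∧ V ^ (m + 1) ⊆ W := by
  induction m generalizing W with
  | zero =>
    obtain ⟨U, Uo, U1, hU⟩ := exists_open_nhds_one_mul_subset hW
    refine ⟨U ∩ U⁻¹, Uo.inter (Uo.inv), ⟨U1, by simpa using U1⟩, by
      simp [Set.inter_comm, Set.inter_inv], ?_⟩
    intro x hx
    rw [pow_one] at hx
    have : x * 1 ∈ W := hU (Set.mul_mem_mul hx.1 U1)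
    simpa using this
  | succ m ih =>
    obtain ⟨U, Uo, U1, hU⟩ := exists_open_nhds_one_mul_subset hW
    obtain ⟨V, Vo, V1, Vsym, hV⟩ := ih (Uo.mem_nhds U1)
    refine ⟨V ∩ (U ∩ U⁻¹), Vo.inter (Uo.inter Uo.inv),
      ⟨V1, U1, by simpa using U1⟩, ?_, ?_⟩
    · rw [Set.inter_inv, Set.inter_inv, ← Vsym, inv_inv, Set.inter_comm U]
    · have h1 : (V ∩ (U ∩ U⁻¹)) ^ (m + 1) ⊆ U :=
        (Set.pow_subset_pow_left Set.inter_subset_left).trans hV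
      have h2 : V ∩ (U ∩ U⁻¹) ⊆ U := fun x hx => hx.2.1
      calc (V ∩ (U ∩ U⁻¹)) ^ (m + 1 + 1)
          = (V ∩ (U ∩ U⁻¹)) ^ (m + 1) * (V ∩ (U ∩ U⁻¹)) := pow_succ _ _
        _ ⊆ U * U := Set.mul_subset_mul h1 h2
        _ ⊆ W := hU

private lemma preimage_pow_subset {G H : Type*} [Group G] [Group H] (φ : G →* H)
    (S : Set H) (m : ℕ) : (φ ⁻¹' S) ^ m ⊆ φ ⁻¹' (S ^ m) := by
  induction m with
  | zero => simp [Set.one_subset, Set.mem_preimage]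
  | succ m ih =>
    rw [pow_succ, pow_succ]
    intro x hx
    obtain ⟨a, ha, b, hb, rfl⟩ := hx
    simp only [Set.mem_preimage, map_mul]
    exact Set.mul_mem_mul (ih ha) hb

/-- The Rosendal–Solecki criterion: an `n`-Steinhaus topological group has the automatic
continuity property. -/
theorem steinhaus_implies_automatic_continuity {G : Type*} [Group G] [TopologicalSpace G]
    [IsTopologicalGroup G] (n : ℕ)
    (hSteinhaus : ∀ A : Set G, (1 : G) ∈ A → A = A⁻¹ →
      (∃ g : ℕ → G, (⋃ i, g i • A) = Set.univ) → A ^ n ∈ nhds (1 : G)) :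
    ∀ (H : Type*) [Group H] [TopologicalSpace H] [IsTopologicalGroup H]
      [TopologicalSpace.SeparableSpace H] (φ : G →* H), Continuous φ := by
  intro H _ _ _ _ φ
  apply continuous_of_continuousAt_one φ
  rw [ContinuousAt, map_one, Filter.tendsto_def]
  intro W hW
  -- find a symmetric open neighborhood V of 1 with V ^ (2n) ⊆ W
  obtain ⟨V, Vo, V1, Vsym, hVW⟩ := sym_open_pow_subset (2 * n) hW
  have hVW' : V ^ (2 * n) ⊆ W :=
    (Set.pow_subset_pow_right V1 (Nat.le_succ _)).trans hVW
  -- countable dense subset of H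
  obtain ⟨D, Dc, Dd⟩ := TopologicalSpace.exists_countable_dense H
  obtain ⟨d, rfl⟩ := Dc.exists_eq_range (Dd.nonempty)
  -- the key set A
  set A : Set G := φ ⁻¹' (V * V) with hA
  have hA1 : (1 : G) ∈ A := by
    simp only [hA, Set.mem_preimage, map_one]
    exact ⟨1, V1, 1, V1, mul_one 1⟩
  have hVV : ∀ s : H, s ∈ V * V → s⁻¹ ∈ V * V := by
    rintro s ⟨v1, hv1, v2, hv2, rfl⟩
    refine ⟨v2⁻¹, by rw [Vsym]; simpa using hv2, v1⁻¹, by rw [Vsym]; simpa using hv1, ?_⟩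
    rw [mul_inv_rev]
  have hAsym : A = A⁻¹ := by
    ext x
    rw [Set.mem_inv]
    simp only [hA, Set.mem_preimage, map_inv]
    constructor
    · intro h; exact hVV _ h
    · intro h; simpa using hVV _ h
  -- translates
  have hVinv : ∀ v ∈ V, v⁻¹ ∈ V := by
    intro v hv; rw [Vsym]; simpa using hv
  classical
  set g : ℕ → G := fun i => if h : ∃ x : G, φ x ∈ d i • V then h.choose else 1 with hg
  have hcover : (⋃ i, g i • A) = Set.univ := by
    rw [Set.eq_univ_iff_forall]
    intro x
    rw [Set.mem_iUnion]
    -- the dense set meets the open nonempty set φ x • V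
    have hopen : IsOpen (φ x • V) := Vo.smul _
    have hne : (φ x • V).Nonempty := ⟨φ x, ⟨1, V1, mul_one _⟩⟩
    obtain ⟨y, hyD, hyV⟩ := Dd.exists_mem_open hopen hne
    obtain ⟨i, rfl⟩ := hyD
    obtain ⟨v, hv, hdv⟩ := hyV
    -- φ x ∈ d i • V
    simp only [smul_eq_mul] at hdv
    have hx : φ x ∈ d i • V := by
      refine ⟨v⁻¹, hVinv v hv, ?_⟩
      show d i • v⁻¹ = φ x
      rw [smul_eq_mul, ← hdv, mul_assoc, mul_inv_cancel, mul_one]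
    have hex : ∃ z : G, φ z ∈ d i • V := ⟨x, hx⟩
    have hgi : φ (g i) ∈ d i • V := by
      rw [hg]; simp only [dif_pos hex]; exact hex.choose_spec
    refine ⟨i, ?_⟩
    rw [Set.mem_smul_set_iff_inv_smul_mem, smul_eq_mul]
    obtain ⟨v1, hv1, hdv1⟩ := hgi
    obtain ⟨v2, hv2, hdv2⟩ := hx
    simp only [smul_eq_mul] at hdv1 hdv2
    simp only [hA, Set.mem_preimage, map_mul, map_inv]
    rw [← hdv1, ← hdv2]
    have : (d i * v1)⁻¹ * (d i * v2) = v1⁻¹ * v2 := by group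
    rw [this]
    exact Set.mul_mem_mul (hVinv v1 hv1) hv2
  have hAn : A ^ n ∈ nhds (1 : G) := hSteinhaus A hA1 hAsym ⟨g, hcover⟩
  refine Filter.mem_of_superset hAn ?_
  have h1 : A ^ n ⊆ φ ⁻¹' ((V * V) ^ n) := preimage_pow_subset φ _ n
  have h2 : (V * V) ^ n = V ^ (2 * n) := by
    rw [← sq, ← pow_mul]
  refine h1.trans ?_
  rw [h2]
  exact fun x hx => hVW' hx
end

section
/- A countable product of extremely amenable topological groups is extremely amenable, and more specifically: if R is a pmp equivalence relation with invariant decomposition X = ⊔_n X_n into R-invariant sets, then [R] is topologically isomorphic to the product ∏_n [R_{|X_n}]; if each [R_{|X_n}] is extremely amenable then so is [R]. -/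
open MeasureTheory

def fullGroup {X : Type*} [MeasurableSpace X] (μ : Measure X)
    (R : X → X → Prop) (hR : Equivalence R) : Subgroup (Equiv.Perm X) where
  carrier := {T | MeasurePreserving T μ μ ∧ MeasurePreserving T.symm μ μ ∧ ∀ x, R x (T x)}
  one_mem' := by
    refine ⟨?_, ?_, fun x => hR.refl x⟩
    · simpa using MeasurePreserving.id μ
    · exact MeasurePreserving.id μ
  mul_mem' := by
    rintro S T ⟨hS1, hS2, hS3⟩ ⟨hT1, hT2, hT3⟩
    refine ⟨?_, ?_, fun x => hR.trans (hT3 x) (hS3 (T x))⟩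
    · simpa [Equiv.Perm.coe_mul] using hS1.comp hT1
    · have h : ⇑(S * T).symm = ⇑T.symm ∘ ⇑S.symm := by ext x; rfl
      rw [h]; exact hT2.comp hS2
  inv_mem' := by
    rintro T ⟨hT1, hT2, hT3⟩
    refine ⟨?_, ?_, fun x => ?_⟩
    · simpa [Equiv.Perm.inv_def] using hT2
    · simpa [Equiv.Perm.inv_def] using hT1
    · have h := hT3 (T.symm x)
      simp only [Equiv.apply_symm_apply] at h
      exact hR.symm h

noncomputable def du {X : Type*} [MeasurableSpace X] (μ : Measure X)
    (S T : Equiv.Perm X) : ℝ := (μ {x | S x ≠ T x}).toReal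

noncomputable def uniformTopology {X : Type*} [MeasurableSpace X] (μ : Measure X)
    (G : Subgroup (Equiv.Perm X)) : TopologicalSpace G :=
  TopologicalSpace.generateFrom
    {s | ∃ (T : G) (r : ℝ), s = {S : G | du μ (S : Equiv.Perm X) (T : Equiv.Perm X) < r}}

def invariantAlgebra {X : Type*} [MeasurableSpace X] (R : X → X → Prop) :
    MeasurableSpace X where
  MeasurableSet' s := MeasurableSet s ∧ ∀ ⦃x y⦄, R x y → (x ∈ s ↔ y ∈ s)
  measurableSet_empty := ⟨MeasurableSet.empty, by simp⟩
  measurableSet_compl := fun s hs =>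
    ⟨hs.1.compl, fun x y h => by simp [Set.mem_compl_iff, hs.2 h]⟩
  measurableSet_iUnion := fun f hf =>
    ⟨MeasurableSet.iUnion fun i => (hf i).1, fun x y h => by
      simp only [Set.mem_iUnion]; exact exists_congr fun i => (hf i).2 h⟩

noncomputable def condMeasure {X : Type*} [MeasurableSpace X] (μ : Measure X)
    (R : X → X → Prop) (A : Set X) : X → ℝ :=
  μ[A.indicator (fun _ => (1 : ℝ)) | invariantAlgebra R]

noncomputable def dC {X : Type*} [MeasurableSpace X] (μ : Measure X)
    (R : X → X → Prop) (S T : Equiv.Perm X) : ℝ :=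
  (eLpNorm (condMeasure μ R {x | (S⁻¹ * T) x ≠ x}) ⊤ μ).toReal

noncomputable def dCTopology {X : Type*} [MeasurableSpace X] (μ : Measure X)
    (R : X → X → Prop) (G : Subgroup (Equiv.Perm X)) : TopologicalSpace G :=
  TopologicalSpace.generateFrom
    {s | ∃ (T : G) (r : ℝ), s = {S : G | dC μ R (T : Equiv.Perm X) (S : Equiv.Perm X) < r}}

/-- Extreme amenability of a topological group: every continuous action on a nonempty
compact Hausdorff space has a fixed point. -/
def ExtremelyAmenable (G : Type*) [Group G] [TopologicalSpace G] : Prop :=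
  ∀ (K : Type) [TopologicalSpace K] [CompactSpace K] [T2Space K] [Nonempty K]
    (act : G → K → K), act 1 = id → (∀ g h, act (g * h) = act g ∘ act h) →
    Continuous (fun p : G × K => act p.1 p.2) → ∃ p, ∀ g, act g p = p

/-- The restriction of a relation to a subset. -/
def restrictRel {X : Type*} (R : X → X → Prop) (A : Set X) : ↥A → ↥A → Prop :=
  fun a b => R ↑a ↑b

theorem restrictRel_equivalence {X : Type*} {R : X → X → Prop} (hR : Equivalence R)
    (A : Set X) : Equivalence (restrictRel R A) :=
  ⟨fun a => hR.refl ↑a, fun h => hR.symm h, fun h h' => hR.trans h h'⟩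

theorem prod_EA (G : ℕ → Type) [∀ n, Group (G n)] [∀ n, TopologicalSpace (G n)]
    (hEA : ∀ n, ExtremelyAmenable (G n)) : ExtremelyAmenable (∀ n, G n) := by
  intro K _ _ _ _ act hone hmul hcont
  -- continuity of individual act g
  have hcact : ∀ g : ∀ n, G n, Continuous (act g) := fun g =>
    hcont.comp (Continuous.prodMk_right g)
  -- fixed sets
  let F : (∀ n, G n) → Set K := fun g => {p | act g p = p}
  have hFc : ∀ g, IsClosed (F g) := fun g => isClosed_eq (hcact g) continuous_id
  -- the nested sets
  let C : ℕ → Set K := fun n => ⋂ (k : ℕ) (_ : k < n) (h : G k), F (Pi.mulSingle k h)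
  have hCc : ∀ n, IsClosed (C n) := fun n =>
    isClosed_iInter fun k => isClosed_iInter fun _ => isClosed_iInter fun h => hFc _
  have hCanti : Antitone C := by
    intro m n hmn
    exact Set.iInter_mono fun k => Set.iInter_mono' fun hk => ⟨lt_of_lt_of_le hk hmn, le_refl _⟩
  have hcomm : ∀ (k n : ℕ), k ≠ n → ∀ (a : G k) (b : G n),
      Pi.mulSingle k a * Pi.mulSingle n b = Pi.mulSingle n b * Pi.mulSingle k a := by
    intro k n hkn a b
    exact (Pi.mulSingle_commute hkn a b).eq
  -- each C n is nonempty, by induction using EA of G n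
  have hCne : ∀ n, (C n).Nonempty := by
    intro n
    induction n with
    | zero => simpa [C] using (inferInstance : Nonempty K).elim fun p => ⟨p, by simp⟩
    | succ n ih =>
      obtain ⟨p0, hp0⟩ := ih
      -- G n acts on C n
      have hact_mem : ∀ (h : G n) (p : K), p ∈ C n → act (Pi.mulSingle n h) p ∈ C n := by
        intro h p hp
        simp only [C, Set.mem_iInter] at hp ⊢
        intro k hk a
        have : act (Pi.mulSingle k a) (act (Pi.mulSingle n h) p)
            = act (Pi.mulSingle n h) (act (Pi.mulSingle k a) p) := by
          rw [← Function.comp_apply (f := act (Pi.mulSingle k a)), ← hmul, hcomm k n hk.ne a h,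
            hmul, Function.comp_apply]
        rw [Set.mem_setOf_eq, this, hp k hk a]
      haveI : Nonempty (C n) := ⟨⟨p0, hp0⟩⟩
      haveI : CompactSpace (C n) := isCompact_iff_compactSpace.mp ((hCc n).isCompact)
      let act' : G n → C n → C n := fun h p => ⟨act (Pi.mulSingle n h) ↑p, hact_mem h ↑p p.2⟩
      have h1 : act' 1 = id := by
        funext p; apply Subtype.ext; simp [act', hone]
      have h2 : ∀ g h, act' (g * h) = act' g ∘ act' h := by
        intro g h; funext p; apply Subtype.ext
        simp only [act', Pi.mulSingle_mul, hmul, Function.comp_apply]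
      have h3 : Continuous (fun q : G n × C n => act' q.1 q.2) := by
        apply Continuous.subtype_mk
        have : Continuous (fun q : G n × C n => (Pi.mulSingle n q.1, (q.2 : K))) := by
          refine Continuous.prodMk ?_ (continuous_subtype_val.comp continuous_snd)
          refine continuous_pi fun k => ?_
          by_cases hkn : k = n
          · subst hkn; simpa using continuous_fst
          · have : (fun q : G n × C n => Pi.mulSingle n q.1 k) = fun _ => 1 := by
              funext q; simp [Pi.mulSingle_eq_of_ne hkn]
            rw [this]; exact continuous_const
        exact hcont.comp this
      obtain ⟨p, hp⟩ := hEA n (C n) act' h1 h2 h3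
      refine ⟨↑p, ?_⟩
      simp only [C, Set.mem_iInter]
      intro k hk a
      rcases Nat.lt_succ_iff_lt_or_eq.mp hk with hk' | rfl
      · exact (Set.mem_iInter.mp (Set.mem_iInter.mp (Set.mem_iInter.mp p.2 k) hk') a)
      · exact congrArg Subtype.val (hp a)
  -- intersect
  obtain ⟨p, hp⟩ := IsCompact.nonempty_iInter_of_sequence_nonempty_isCompact_isClosed
    C (fun n => hCanti (Nat.le_succ n)) hCne (hCc 0).isCompact hCc
  -- p is fixed by all mulSingles
  have hfix : ∀ (k : ℕ) (a : G k), act (Pi.mulSingle k a) p = p := by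
    intro k a
    have := Set.mem_iInter.mp hp (k + 1)
    simp only [C, Set.mem_iInter] at this
    exact this k (Nat.lt_succ_self k) a
  -- finitely supported elements fix p
  have hfin : ∀ (N : ℕ) (g : ∀ n, G n), (∀ k, N ≤ k → g k = 1) → act g p = p := by
    intro N
    induction N with
    | zero => intro g hg; have : g = 1 := funext fun k => hg k (Nat.zero_le k); rw [this, hone]; rfl
    | succ N ih =>
      intro g hg
      have key : g = (g * (Pi.mulSingle N (g N))⁻¹) * Pi.mulSingle N (g N) := by group
      rw [key, hmul, Function.comp_apply, hfix N (g N)]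
      apply ih
      intro k hk
      rcases eq_or_lt_of_le hk with rfl | hk'
      · simp
      · have h1 : g k = 1 := hg k hk'
        have h2 : Pi.mulSingle N (g N) k = 1 := Pi.mulSingle_eq_of_ne (by omega) _
        simp [Pi.mul_apply, Pi.inv_apply, h1, h2]
  -- the stabilizer is closed and contains a dense set
  refine ⟨p, fun g => ?_⟩
  have hclosed : IsClosed {g : ∀ n, G n | act g p = p} :=
    isClosed_eq (hcont.comp (continuous_id.prodMk continuous_const)) continuous_const
  classical
  have hdense : g ∈ closure {h : ∀ n, G n | ∃ N, ∀ k, N ≤ k → h k = 1} := by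
    rw [mem_closure_iff]
    intro o ho hgo
    obtain ⟨I, u, hu, hsub⟩ := isOpen_pi_iff.mp ho g hgo
    obtain ⟨N, hN⟩ := I.exists_nat_subset_range
    refine ⟨fun k => if k ∈ I then g k else 1, hsub ?_, N, fun k hk => ?_⟩
    · rw [Set.mem_pi]
      intro a ha
      rw [if_pos (by simpa using ha)]
      exact (hu a (by simpa using ha)).2
    · have : k ∉ I := fun hkI => by
        have := hN hkI; simp only [Finset.mem_range] at this; omega
      simp [this]
  exact closure_minimal (fun h hh => by obtain ⟨N, hN⟩ := hh; exact hfin N h hN) hclosed hdense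



section Part2
variable {X : Type}

/-- index of the piece containing x -/
noncomputable def pidx (Xn : ℕ → Set X) (hcover : (⋃ n, Xn n) = Set.univ) (x : X) : ℕ :=
  (Set.mem_iUnion.mp (hcover ▸ Set.mem_univ x : x ∈ ⋃ n, Xn n)).choose

lemma pidx_mem (Xn : ℕ → Set X) (hcover : (⋃ n, Xn n) = Set.univ) (x : X) :
    x ∈ Xn (pidx Xn hcover x) :=
  (Set.mem_iUnion.mp (hcover ▸ Set.mem_univ x : x ∈ ⋃ n, Xn n)).choose_spec

lemma pidx_eq {Xn : ℕ → Set X} (hdisj : ∀ m n, m ≠ n → Disjoint (Xn m) (Xn n))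
    (hcover : (⋃ n, Xn n) = Set.univ) {x : X} {n : ℕ} (hx : x ∈ Xn n) :
    pidx Xn hcover x = n := by
  by_contra h
  exact (hdisj _ _ h).ne_of_mem (pidx_mem Xn hcover x) hx rfl

/-- raw glued function -/
noncomputable def gfun (Xn : ℕ → Set X) (hcover : (⋃ n, Xn n) = Set.univ)
    (T : ∀ n, Equiv.Perm (Xn n)) (x : X) : X :=
  ↑(T (pidx Xn hcover x) ⟨x, pidx_mem Xn hcover x⟩)

lemma gfun_apply {Xn : ℕ → Set X} (hdisj : ∀ m n, m ≠ n → Disjoint (Xn m) (Xn n))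
    (hcover : (⋃ n, Xn n) = Set.univ) (T : ∀ n, Equiv.Perm (Xn n)) {x : X} {n : ℕ}
    (hx : x ∈ Xn n) : gfun Xn hcover T x = ↑(T n ⟨x, hx⟩) := by
  have h : pidx Xn hcover x = n := pidx_eq hdisj hcover hx
  subst h
  rfl

lemma gfun_mem {Xn : ℕ → Set X} (hdisj : ∀ m n, m ≠ n → Disjoint (Xn m) (Xn n))
    (hcover : (⋃ n, Xn n) = Set.univ) (T : ∀ n, Equiv.Perm (Xn n)) {x : X} {n : ℕ}
    (hx : x ∈ Xn n) : gfun Xn hcover T x ∈ Xn n := by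
  rw [gfun_apply hdisj hcover T hx]
  exact (T n ⟨x, hx⟩).2

/-- glue a family of permutations of the pieces into a permutation of X -/
noncomputable def glue (Xn : ℕ → Set X) (hdisj : ∀ m n, m ≠ n → Disjoint (Xn m) (Xn n))
    (hcover : (⋃ n, Xn n) = Set.univ) (T : ∀ n, Equiv.Perm (Xn n)) : Equiv.Perm X where
  toFun := gfun Xn hcover T
  invFun := gfun Xn hcover (fun n => (T n).symm)
  left_inv x := by
    have h1 : x ∈ Xn (pidx Xn hcover x) := pidx_mem Xn hcover x
    have hy : gfun Xn hcover T x ∈ Xn (pidx Xn hcover x) := gfun_mem hdisj hcover T h1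
    rw [gfun_apply hdisj hcover _ hy,
      show (⟨gfun Xn hcover T x, hy⟩ : Xn (pidx Xn hcover x)) = T (pidx Xn hcover x) ⟨x, h1⟩
        from Subtype.ext (gfun_apply hdisj hcover T h1),
      Equiv.symm_apply_apply]
  right_inv x := by
    have h1 : x ∈ Xn (pidx Xn hcover x) := pidx_mem Xn hcover x
    have hy : gfun Xn hcover (fun n => (T n).symm) x ∈ Xn (pidx Xn hcover x) :=
      gfun_mem hdisj hcover _ h1
    rw [gfun_apply hdisj hcover _ hy,
      show (⟨gfun Xn hcover (fun n => (T n).symm) x, hy⟩ : Xn (pidx Xn hcover x))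
          = (T (pidx Xn hcover x)).symm ⟨x, h1⟩
        from Subtype.ext (gfun_apply hdisj hcover (fun n => (T n).symm) h1),
      Equiv.apply_symm_apply]

lemma glue_apply {Xn : ℕ → Set X} (hdisj : ∀ m n, m ≠ n → Disjoint (Xn m) (Xn n))
    (hcover : (⋃ n, Xn n) = Set.univ) (T : ∀ n, Equiv.Perm (Xn n)) {x : X} {n : ℕ}
    (hx : x ∈ Xn n) : glue Xn hdisj hcover T x = ↑(T n ⟨x, hx⟩) :=
  gfun_apply hdisj hcover T hx

lemma glue_symm {Xn : ℕ → Set X} (hdisj : ∀ m n, m ≠ n → Disjoint (Xn m) (Xn n))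
    (hcover : (⋃ n, Xn n) = Set.univ) (T : ∀ n, Equiv.Perm (Xn n)) :
    (glue Xn hdisj hcover T).symm = glue Xn hdisj hcover (fun n => (T n).symm) :=
  Equiv.ext fun _ => rfl

end Part2

section Meas
variable {X : Type} [MeasurableSpace X] {μ : Measure X} {Xn : ℕ → Set X}
  (hmeas : ∀ n, MeasurableSet (Xn n))
  (hdisj : ∀ m n, m ≠ n → Disjoint (Xn m) (Xn n))
  (hcover : (⋃ n, Xn n) = Set.univ)
include hmeas hdisj hcover

lemma comap_apply' (n : ℕ) (s : Set (Xn n)) :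
    μ.comap Subtype.val s = μ (Subtype.val '' s) :=
  (MeasurableEmbedding.subtype_coe (hmeas n)).comap_apply μ s

lemma glue_preimage (T : ∀ n, Equiv.Perm (Xn n)) (s : Set X) :
    (glue Xn hdisj hcover T) ⁻¹' s
      = ⋃ n, Subtype.val '' ((T n) ⁻¹' (Subtype.val ⁻¹' s) : Set (Xn n)) := by
  ext x
  simp only [Set.mem_preimage, Set.mem_iUnion, Set.mem_image]
  constructor
  · intro hx
    refine ⟨pidx Xn hcover x, ⟨x, pidx_mem Xn hcover x⟩, ?_, rfl⟩
    simpa [glue_apply hdisj hcover T (pidx_mem Xn hcover x)] using hx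
  · rintro ⟨n, a, ha, rfl⟩
    simpa [glue_apply hdisj hcover T a.2] using ha

lemma glue_measure_preimage (T : ∀ n, Equiv.Perm (Xn n))
    (hmp : ∀ n, MeasurePreserving (T n) (μ.comap (Subtype.val : Xn n → X))
      (μ.comap (Subtype.val : Xn n → X)))
    {s : Set X} (hs : MeasurableSet s) :
    MeasurableSet ((glue Xn hdisj hcover T) ⁻¹' s)
      ∧ μ ((glue Xn hdisj hcover T) ⁻¹' s) = μ s := by
  have hpiece : ∀ n, MeasurableSet (Subtype.val '' ((T n) ⁻¹' (Subtype.val ⁻¹' s) : Set (Xn n))) := by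
    intro n
    exact (MeasurableEmbedding.subtype_coe (hmeas n)).measurableSet_image.mpr
      ((hmp n).measurable (measurable_subtype_coe hs))
  have hμpiece : ∀ n, μ (Subtype.val '' ((T n) ⁻¹' (Subtype.val ⁻¹' s) : Set (Xn n)))
      = μ (s ∩ Xn n) := by
    intro n
    rw [← comap_apply' hmeas hdisj hcover n, (hmp n).measure_preimage
      ((measurable_subtype_coe hs).nullMeasurableSet), comap_apply' hmeas hdisj hcover n,
      Subtype.image_preimage_coe, Set.inter_comm]
  have hd : Pairwise (Function.onFun Disjoint
      (fun n => Subtype.val '' ((T n) ⁻¹' (Subtype.val ⁻¹' s) : Set (Xn n)))) := by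
    intro m n hmn
    exact Set.disjoint_of_subset (by rintro x ⟨a, _, rfl⟩; exact a.2)
      (by rintro x ⟨a, _, rfl⟩; exact a.2) (hdisj m n hmn)
  constructor
  · rw [glue_preimage hmeas hdisj hcover]
    exact MeasurableSet.iUnion hpiece
  · rw [glue_preimage hmeas hdisj hcover, measure_iUnion hd hpiece]
    simp_rw [hμpiece]
    rw [← measure_iUnion (fun m n hmn => Set.disjoint_of_subset Set.inter_subset_right
        Set.inter_subset_right (hdisj m n hmn)) (fun n => hs.inter (hmeas n)),
      ← Set.inter_iUnion, hcover, Set.inter_univ]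

lemma glue_mp (T : ∀ n, Equiv.Perm (Xn n))
    (hmp : ∀ n, MeasurePreserving (T n) (μ.comap (Subtype.val : Xn n → X))
      (μ.comap (Subtype.val : Xn n → X))) :
    MeasurePreserving (glue Xn hdisj hcover T) μ μ := by
  have hmeasf : Measurable (glue Xn hdisj hcover T) := fun s hs =>
    (glue_measure_preimage hmeas hdisj hcover T hmp hs).1
  refine ⟨hmeasf, ?_⟩
  ext s hs
  rw [Measure.map_apply hmeasf hs]
  exact (glue_measure_preimage hmeas hdisj hcover T hmp hs).2

end Meas

section Restrict
variable {X : Type} [MeasurableSpace X] {μ : Measure X} {Xn : ℕ → Set X}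

/-- restriction of a permutation preserving each piece -/
def restrictPerm (T : Equiv.Perm X) (h : ∀ n x, x ∈ Xn n ↔ T x ∈ Xn n) (n : ℕ) :
    Equiv.Perm (Xn n) where
  toFun a := ⟨T a, (h n a).mp a.2⟩
  invFun a := ⟨T.symm a, by
    have := (h n (T.symm a))
    rw [Equiv.apply_symm_apply] at this
    exact this.mpr a.2⟩
  left_inv a := Subtype.ext (T.symm_apply_apply a)
  right_inv a := Subtype.ext (T.apply_symm_apply a)

lemma restrictPerm_symm (T : Equiv.Perm X) (h : ∀ n x, x ∈ Xn n ↔ T x ∈ Xn n)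
    (h' : ∀ n x, x ∈ Xn n ↔ T.symm x ∈ Xn n) (n : ℕ) :
    (restrictPerm T h n).symm = restrictPerm T.symm h' n :=
  Equiv.ext fun _ => rfl

lemma restrict_image (T : Equiv.Perm X) (h : ∀ n x, x ∈ Xn n ↔ T x ∈ Xn n) (n : ℕ)
    (s : Set (Xn n)) :
    Subtype.val '' ((restrictPerm T h n) ⁻¹' s) = T ⁻¹' (Subtype.val '' s) := by
  ext x
  simp only [Set.mem_image, Set.mem_preimage]
  constructor
  · rintro ⟨a, ha, rfl⟩
    exact ⟨restrictPerm T h n a, ha, rfl⟩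
  · rintro ⟨b, hb, hbx⟩
    have hxn : x ∈ Xn n := (h n x).mpr (hbx ▸ b.2)
    refine ⟨⟨x, hxn⟩, ?_, rfl⟩
    have : restrictPerm T h n ⟨x, hxn⟩ = b := Subtype.ext hbx.symm
    rw [this]; exact hb

lemma restrictPerm_mp (hmeas : ∀ n, MeasurableSet (Xn n)) (T : Equiv.Perm X)
    (hT : MeasurePreserving T μ μ) (h : ∀ n x, x ∈ Xn n ↔ T x ∈ Xn n) (n : ℕ) :
    MeasurePreserving (restrictPerm T h n) (μ.comap (Subtype.val : Xn n → X))
      (μ.comap (Subtype.val : Xn n → X)) := by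
  have hemb := MeasurableEmbedding.subtype_coe (hmeas n)
  have hmble : Measurable (restrictPerm T h n) :=
    Measurable.subtype_mk (hT.measurable.comp measurable_subtype_coe)
  refine ⟨hmble, ?_⟩
  ext s hs
  rw [Measure.map_apply hmble hs, hemb.comap_apply, hemb.comap_apply,
    restrict_image, hT.measure_preimage (hemb.measurableSet_image.mpr hs).nullMeasurableSet]

end Restrict

section Iso
variable {X : Type} [MeasurableSpace X] {μ : Measure X} {R : X → X → Prop} {hR : Equivalence R}
  {Xn : ℕ → Set X}

lemma fg_fix (hinv : ∀ n x y, R x y → (x ∈ Xn n ↔ y ∈ Xn n))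
    (T : ↥(fullGroup μ R hR)) : ∀ n x, x ∈ Xn n ↔ (T : Equiv.Perm X) x ∈ Xn n :=
  fun n x => hinv n x _ (T.2.2.2 x)

lemma fg_fix_symm (hinv : ∀ n x y, R x y → (x ∈ Xn n ↔ y ∈ Xn n))
    (T : ↥(fullGroup μ R hR)) : ∀ n x, x ∈ Xn n ↔ (T : Equiv.Perm X).symm x ∈ Xn n :=
  fun n x => hinv n x _ (((fullGroup μ R hR).inv_mem T.2).2.2 x)

variable (μ R hR Xn) in
/-- the group isomorphism between the full group and the product of the full groups
of the restrictions -/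
noncomputable def fgEquiv (hmeas : ∀ n, MeasurableSet (Xn n))
    (hdisj : ∀ m n, m ≠ n → Disjoint (Xn m) (Xn n))
    (hcover : (⋃ n, Xn n) = Set.univ)
    (hinv : ∀ n x y, R x y → (x ∈ Xn n ↔ y ∈ Xn n)) :
    ↥(fullGroup μ R hR) ≃*
      (∀ n, ↥(fullGroup (μ.comap (Subtype.val : ↥(Xn n) → X))
        (restrictRel R (Xn n)) (restrictRel_equivalence hR (Xn n)))) where
  toFun T := fun n => ⟨restrictPerm (T : Equiv.Perm X) (fg_fix hinv T) n,
    restrictPerm_mp hmeas _ T.2.1 _ n,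
    by
      rw [restrictPerm_symm _ _ (fg_fix_symm hinv T) n]
      exact restrictPerm_mp hmeas _ T.2.2.1 _ n,
    fun a => T.2.2.2 ↑a⟩
  invFun S := ⟨glue Xn hdisj hcover (fun n => ↑(S n)),
    glue_mp hmeas hdisj hcover _ (fun n => (S n).2.1),
    by
      rw [glue_symm hdisj hcover]
      exact glue_mp hmeas hdisj hcover _ (fun n => (S n).2.2.1),
    fun x => by
      have h := (S (pidx Xn hcover x)).2.2.2 ⟨x, pidx_mem Xn hcover x⟩
      exact h⟩
  left_inv T := Subtype.ext (Equiv.ext fun x => rfl)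
  right_inv S := by
    funext n
    refine Subtype.ext (Equiv.ext fun a => Subtype.ext ?_)
    exact glue_apply hdisj hcover _ a.2
  map_mul' S T := by
    funext n
    exact Subtype.ext (Equiv.ext fun a => Subtype.ext rfl)

end Iso

section Topo
variable {X : Type} [MeasurableSpace X] {μ : Measure X}

lemma du_self (S : Equiv.Perm X) : du μ S S = 0 := by
  simp [du]

lemma du_triangle [IsFiniteMeasure μ] (S T U : Equiv.Perm X) :
    du μ S U ≤ du μ S T + du μ T U := by
  have hsub : {x | S x ≠ U x} ⊆ {x | S x ≠ T x} ∪ {x | T x ≠ U x} := by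
    intro x hx
    by_contra h
    simp only [Set.mem_union, Set.mem_setOf_eq, not_or, not_not] at h
    exact hx (h.1.trans h.2)
  have h1 : μ {x | S x ≠ U x} ≤ μ {x | S x ≠ T x} + μ {x | T x ≠ U x} :=
    (measure_mono hsub).trans (measure_union_le _ _)
  rw [du, du, du, ← ENNReal.toReal_add (measure_ne_top μ _) (measure_ne_top μ _)]
  exact ENNReal.toReal_mono (ENNReal.add_ne_top.mpr ⟨measure_ne_top μ _, measure_ne_top μ _⟩) h1

lemma isOpen_ball {G : Subgroup (Equiv.Perm X)} (T : G) (r : ℝ) :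
    (uniformTopology μ G).IsOpen {S : G | du μ ↑S ↑T < r} :=
  TopologicalSpace.GenerateOpen.basic _ ⟨T, r, rfl⟩

lemma isOpen_of_balls {G : Subgroup (Equiv.Perm X)} {P : Set G}
    (h : ∀ S ∈ P, ∃ r > 0, ∀ S' : G, du μ ↑S' ↑S < r → S' ∈ P) :
    (uniformTopology μ G).IsOpen P := by
  classical
  choose r hr0 hrP using h
  have hP : P = ⋃₀ {B | ∃ S, ∃ hS : S ∈ P, B = {S' : G | du μ ↑S' ↑S < r S hS}} := by
    ext S'
    constructor
    · intro hS'
      exact ⟨_, ⟨S', hS', rfl⟩, by simpa [du_self] using hr0 S' hS'⟩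
    · rintro ⟨B, ⟨S, hS, rfl⟩, hS'B⟩
      exact hrP S hS S' hS'B
  rw [hP]
  exact TopologicalSpace.GenerateOpen.sUnion _ (by
    rintro B ⟨S, hS, rfl⟩
    exact TopologicalSpace.GenerateOpen.basic _ ⟨S, _, rfl⟩)

variable {Xn : ℕ → Set X}

lemma comapFin [IsFiniteMeasure μ] {n : ℕ} (hmeas : ∀ n, MeasurableSet (Xn n)) :
    IsFiniteMeasure (μ.comap (Subtype.val : Xn n → X)) := by
  constructor
  rw [(MeasurableEmbedding.subtype_coe (hmeas n)).comap_apply]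
  exact measure_lt_top μ _

lemma du_restrict_le [IsFiniteMeasure μ] (hmeas : ∀ n, MeasurableSet (Xn n))
    (S T : Equiv.Perm X) (hS : ∀ n x, x ∈ Xn n ↔ S x ∈ Xn n)
    (hT : ∀ n x, x ∈ Xn n ↔ T x ∈ Xn n) (n : ℕ) :
    du (μ.comap (Subtype.val : Xn n → X)) (restrictPerm S hS n) (restrictPerm T hT n)
      ≤ du μ S T := by
  rw [du, du, (MeasurableEmbedding.subtype_coe (hmeas n)).comap_apply]
  refine ENNReal.toReal_mono (measure_ne_top μ _) (measure_mono ?_)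
  rintro x ⟨a, ha, rfl⟩
  exact fun he => ha (Subtype.ext he)

lemma du_glue_le [IsFiniteMeasure μ] (hmeas : ∀ n, MeasurableSet (Xn n))
    (hdisj : ∀ m n, m ≠ n → Disjoint (Xn m) (Xn n))
    (hcover : (⋃ n, Xn n) = Set.univ)
    (U S : ∀ n, Equiv.Perm (Xn n)) (N : ℕ) :
    du μ (glue Xn hdisj hcover U) (glue Xn hdisj hcover S)
      ≤ (∑ n ∈ Finset.range N, du (μ.comap (Subtype.val : Xn n → X)) (U n) (S n))
        + (μ (⋃ (n) (_ : N ≤ n), Xn n)).toReal := by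
  set tail := ⋃ (n) (_ : N ≤ n), Xn n
  have hsub : {x | glue Xn hdisj hcover U x ≠ glue Xn hdisj hcover S x}
      ⊆ (⋃ n ∈ Finset.range N, Subtype.val '' {a : Xn n | U n a ≠ S n a}) ∪ tail := by
    intro x hx
    rcases lt_or_ge (pidx Xn hcover x) N with h | h
    · left
      refine Set.mem_biUnion (Finset.mem_range.mpr h) ⟨⟨x, pidx_mem Xn hcover x⟩, ?_, rfl⟩
      intro he
      exact hx (by
        rw [glue_apply hdisj hcover U (pidx_mem Xn hcover x),
          glue_apply hdisj hcover S (pidx_mem Xn hcover x)]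
        exact congrArg Subtype.val he)
    · exact Or.inr (Set.mem_iUnion.mpr ⟨pidx Xn hcover x,
        Set.mem_iUnion.mpr ⟨h, pidx_mem Xn hcover x⟩⟩)
  have h1 : μ {x | glue Xn hdisj hcover U x ≠ glue Xn hdisj hcover S x}
      ≤ (∑ n ∈ Finset.range N, μ (Subtype.val '' {a : Xn n | U n a ≠ S n a})) + μ tail :=
    (measure_mono hsub).trans ((measure_union_le _ _).trans
      (add_le_add_left (measure_biUnion_finset_le _ _) _))
  have h2 : du μ (glue Xn hdisj hcover U) (glue Xn hdisj hcover S)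
      ≤ ((∑ n ∈ Finset.range N, μ (Subtype.val '' {a : Xn n | U n a ≠ S n a})) + μ tail).toReal := by
    refine ENNReal.toReal_mono ?_ h1
    exact ENNReal.add_ne_top.mpr ⟨ENNReal.sum_ne_top.mpr fun n _ => measure_ne_top μ _,
      measure_ne_top μ _⟩
  refine h2.trans (le_of_eq ?_)
  rw [ENNReal.toReal_add ?ha (measure_ne_top μ _), ENNReal.toReal_sum fun n _ => measure_ne_top μ _]
  case ha => exact (ENNReal.sum_ne_top).mpr fun n _ => measure_ne_top μ _
  congr 1
  refine Finset.sum_congr rfl fun n _ => ?_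
  rw [du, (MeasurableEmbedding.subtype_coe (hmeas n)).comap_apply]

lemma tail_small [IsFiniteMeasure μ] (hmeas : ∀ n, MeasurableSet (Xn n))
    (hdisj : ∀ m n, m ≠ n → Disjoint (Xn m) (Xn n)) {ε : ℝ} (hε : 0 < ε) :
    ∃ N, 1 ≤ N ∧ (μ (⋃ (n) (_ : N ≤ n), Xn n)).toReal < ε := by
  set A : ℕ → Set X := fun N => ⋃ (n) (_ : N ≤ n), Xn n with hA
  have hanti : Antitone A := fun M N hMN =>
    Set.iUnion_mono fun n => Set.iUnion_mono' fun h => ⟨le_trans hMN h, le_refl _⟩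
  have hint : ⋂ N, A N = ∅ := by
    ext x
    simp only [Set.mem_iInter, Set.mem_empty_iff_false, iff_false, not_forall]
    by_contra h
    push_neg at h
    obtain ⟨n₀, hn₀'⟩ := Set.mem_iUnion.mp (h 0)
    obtain ⟨-, hn₀⟩ := Set.mem_iUnion.mp hn₀'
    obtain ⟨m, hm'⟩ := Set.mem_iUnion.mp (h (n₀ + 1))
    obtain ⟨hm, hxm⟩ := Set.mem_iUnion.mp hm'
    exact (hdisj m n₀ (by omega)).ne_of_mem hxm hn₀ rfl
  have hten : Filter.Tendsto (fun N => μ (A N)) Filter.atTop (nhds 0) := by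
    have := tendsto_measure_iInter_atTop (μ := μ) (s := A)
      (fun N => (MeasurableSet.iUnion fun n => MeasurableSet.iUnion fun _ =>
        hmeas n).nullMeasurableSet) hanti ⟨0, measure_ne_top μ _⟩
    rwa [hint, measure_empty] at this
  have htenR : Filter.Tendsto (fun N => (μ (A N)).toReal) Filter.atTop (nhds 0) := by
    have := (ENNReal.tendsto_toReal (a := 0) (by simp)).comp hten
    simpa [Function.comp_def] using this
  have := htenR.eventually (gt_mem_nhds hε)
  obtain ⟨N₀, hN₀⟩ := Filter.eventually_atTop.mp this
  exact ⟨max N₀ 1, le_max_right _ _, hN₀ _ (le_max_left _ _)⟩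

end Topo
section Cont
variable {X : Type} [MeasurableSpace X] {μ : Measure X} {R : X → X → Prop} {hR : Equivalence R}
  {Xn : ℕ → Set X}

lemma fgEquiv_cont [IsProbabilityMeasure μ] (hmeas : ∀ n, MeasurableSet (Xn n))
    (hdisj : ∀ m n, m ≠ n → Disjoint (Xn m) (Xn n)) (hcover : (⋃ n, Xn n) = Set.univ)
    (hinv : ∀ n x y, R x y → (x ∈ Xn n ↔ y ∈ Xn n)) :
    @Continuous _ _ (uniformTopology μ (fullGroup μ R hR))
      (@Pi.topologicalSpace _ _ fun n =>
        uniformTopology (μ.comap (Subtype.val : ↥(Xn n) → X))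
          (fullGroup _ _ (restrictRel_equivalence hR (Xn n))))
      ⇑(fgEquiv μ R hR Xn hmeas hdisj hcover hinv) := by
  letI : TopologicalSpace ↥(fullGroup μ R hR) := uniformTopology μ _
  letI : ∀ n, TopologicalSpace ↥(fullGroup (μ.comap (Subtype.val : ↥(Xn n) → X))
      (restrictRel R (Xn n)) (restrictRel_equivalence hR (Xn n))) := fun n =>
    uniformTopology (μ.comap (Subtype.val : ↥(Xn n) → X))
      (fullGroup _ _ (restrictRel_equivalence hR (Xn n)))
  refine continuous_pi fun n => ?_
  haveI : IsFiniteMeasure (μ.comap (Subtype.val : Xn n → X)) := comapFin hmeas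
  apply continuous_generateFrom_iff.mpr
  rintro s ⟨A, r, rfl⟩
  refine isOpen_of_balls fun T hT => ?_
  simp only [Set.mem_preimage, Set.mem_setOf_eq] at hT ⊢
  refine ⟨r - du (μ.comap (Subtype.val : ↥(Xn n) → X)) ↑(fgEquiv μ R hR Xn hmeas hdisj hcover hinv T n) ↑A, by linarith, fun T' hT' => ?_⟩
  show du (μ.comap (Subtype.val : ↥(Xn n) → X))
    ↑(fgEquiv μ R hR Xn hmeas hdisj hcover hinv T' n) ↑A < r
  have h1 := du_triangle (μ := μ.comap (Subtype.val : ↥(Xn n) → X))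
    ↑(fgEquiv μ R hR Xn hmeas hdisj hcover hinv T' n)
    ↑(fgEquiv μ R hR Xn hmeas hdisj hcover hinv T n) ↑A
  have h2 : du (μ.comap (Subtype.val : ↥(Xn n) → X))
      ↑(fgEquiv μ R hR Xn hmeas hdisj hcover hinv T' n)
      ↑(fgEquiv μ R hR Xn hmeas hdisj hcover hinv T n) ≤ du μ ↑T' ↑T :=
    du_restrict_le hmeas ↑T' ↑T (fg_fix hinv T') (fg_fix hinv T) n
  linarith

lemma fgEquiv_symm_cont [IsProbabilityMeasure μ] (hmeas : ∀ n, MeasurableSet (Xn n))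
    (hdisj : ∀ m n, m ≠ n → Disjoint (Xn m) (Xn n)) (hcover : (⋃ n, Xn n) = Set.univ)
    (hinv : ∀ n x y, R x y → (x ∈ Xn n ↔ y ∈ Xn n)) :
    @Continuous _ _
      (@Pi.topologicalSpace _ _ fun n =>
        uniformTopology (μ.comap (Subtype.val : ↥(Xn n) → X))
          (fullGroup _ _ (restrictRel_equivalence hR (Xn n))))
      (uniformTopology μ (fullGroup μ R hR))
      ⇑(fgEquiv μ R hR Xn hmeas hdisj hcover hinv).symm := by
  letI : TopologicalSpace ↥(fullGroup μ R hR) := uniformTopology μ _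
  letI : ∀ n, TopologicalSpace ↥(fullGroup (μ.comap (Subtype.val : ↥(Xn n) → X))
      (restrictRel R (Xn n)) (restrictRel_equivalence hR (Xn n))) := fun n =>
    uniformTopology (μ.comap (Subtype.val : ↥(Xn n) → X))
      (fullGroup _ _ (restrictRel_equivalence hR (Xn n)))
  set e := fgEquiv μ R hR Xn hmeas hdisj hcover hinv with he
  apply continuous_generateFrom_iff.mpr
  rintro s ⟨A, r, rfl⟩
  rw [isOpen_iff_forall_mem_open]
  intro S hS
  have hS' : du μ ↑(e.symm S) ↑A < r := hS
  have hε : 0 < r - du μ ↑(e.symm S) ↑A := by linarith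
  obtain ⟨N, hN1, hNtail⟩ := tail_small (μ := μ) hmeas hdisj (half_pos hε)
  set ε := r - du μ ↑(e.symm S) ↑A with hεdef
  set δ := ε / (2 * N) with hδdef
  have hδ : 0 < δ := div_pos hε (by positivity)
  refine ⟨⋂ n ∈ Finset.range N,
    (fun S' : ∀ m, ↥(fullGroup (μ.comap (Subtype.val : ↥(Xn m) → X))
      (restrictRel R (Xn m)) (restrictRel_equivalence hR (Xn m))) => S' n) ⁻¹'
      {B | du (μ.comap (Subtype.val : ↥(Xn n) → X)) ↑B ↑(S n) < δ}, ?_, ?_, ?_⟩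
  · intro U hU
    simp only [Set.mem_iInter, Set.mem_preimage, Set.mem_setOf_eq] at hU
    show du μ ↑(e.symm U) ↑A < r
    have htri := du_triangle (μ := μ) ↑(e.symm U) ↑(e.symm S) ↑A
    have hg : du μ ↑(e.symm U) ↑(e.symm S)
        ≤ (∑ n ∈ Finset.range N, du (μ.comap (Subtype.val : ↥(Xn n) → X)) ↑(U n) ↑(S n))
          + (μ (⋃ (n) (_ : N ≤ n), Xn n)).toReal :=
      du_glue_le hmeas hdisj hcover _ _ N
    have hsum : (∑ n ∈ Finset.range N,
        du (μ.comap (Subtype.val : ↥(Xn n) → X)) ↑(U n) ↑(S n)) ≤ N * δ := by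
      calc _ ≤ ∑ _n ∈ Finset.range N, δ :=
            Finset.sum_le_sum fun n hn => (hU n hn).le
        _ = N * δ := by rw [Finset.sum_const, Finset.card_range, nsmul_eq_mul]
    have hNδ : (N : ℝ) * δ = ε / 2 := by
      rw [hδdef]
      field_simp
    linarith
  · exact isOpen_biInter_finset fun n _ =>
      IsOpen.preimage (continuous_apply n)
        (isOpen_ball (μ := μ.comap (Subtype.val : ↥(Xn n) → X)) (S n) δ)
  · simp only [Set.mem_iInter, Set.mem_preimage, Set.mem_setOf_eq]
    intro n _
    simpa [du_self] using hδ

end Cont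

lemma EA_transfer {G H : Type} [Group G] [Group H] (tG : TopologicalSpace G)
    (tH : TopologicalSpace H) (e : H ≃* G) (hc : @Continuous G H tG tH ⇑e.symm)
    (hG : @ExtremelyAmenable G _ tG) : @ExtremelyAmenable H _ tH := by
  letI := tG; letI := tH
  intro K _ _ _ _ act hone hmul hcont
  obtain ⟨p, hp⟩ := hG K (fun g k => act (e.symm g) k)
    (by funext k; show act (e.symm 1) k = id k; rw [map_one, hone])
    (fun g h => by
      funext k
      show act (e.symm (g * h)) k = (act (e.symm g) ∘ act (e.symm h)) k
      rw [map_mul, hmul])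
    (hcont.comp ((hc.comp continuous_fst).prodMk continuous_snd))
  refine ⟨p, fun h => ?_⟩
  have := hp (e h)
  rwa [MulEquiv.symm_apply_apply] at this

/-- A countable product of extremely amenable groups is extremely amenable; and if
`X = ⊔ₙ Xₙ` is a decomposition into `R`-invariant sets, then `[R]` is topologically
isomorphic to `∏ₙ [R|Xₙ]`, so that extreme amenability of each factor implies that
of `[R]`. -/
theorem product_extremely_amenable_and_fullGroup_decomposition :
    (∀ (G : ℕ → Type) [∀ n, Group (G n)] [∀ n, TopologicalSpace (G n)],
      (∀ n, ExtremelyAmenable (G n)) → ExtremelyAmenable (∀ n, G n)) ∧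
    (∀ (X : Type) (_ : MeasurableSpace X) (μ : Measure X), IsProbabilityMeasure μ →
      ∀ (R : X → X → Prop) (hR : Equivalence R),
      (∃ T : ℕ → Equiv.Perm X, (∀ n, MeasurePreserving (T n) μ μ) ∧
        ∀ x y, R x y ↔ ∃ n, T n x = y) →
      ∀ (Xn : ℕ → Set X), (∀ n, MeasurableSet (Xn n)) →
      (∀ m n, m ≠ n → Disjoint (Xn m) (Xn n)) → (⋃ n, Xn n) = Set.univ →
      (∀ n x y, R x y → (x ∈ Xn n ↔ y ∈ Xn n)) →
      ∃ e : ↥(fullGroup μ R hR) ≃*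
          (∀ n, ↥(fullGroup (μ.comap (Subtype.val : ↥(Xn n) → X))
            (restrictRel R (Xn n)) (restrictRel_equivalence hR (Xn n)))),
        @Continuous _ _ (uniformTopology μ (fullGroup μ R hR))
          (@Pi.topologicalSpace _ _ fun n =>
            uniformTopology (μ.comap (Subtype.val : ↥(Xn n) → X))
              (fullGroup _ _ (restrictRel_equivalence hR (Xn n)))) ⇑e ∧
        @Continuous _ _
          (@Pi.topologicalSpace _ _ fun n =>
            uniformTopology (μ.comap (Subtype.val : ↥(Xn n) → X))
              (fullGroup _ _ (restrictRel_equivalence hR (Xn n))))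
          (uniformTopology μ (fullGroup μ R hR)) ⇑e.symm ∧
        ((∀ n, @ExtremelyAmenable
            ↥(fullGroup (μ.comap (Subtype.val : ↥(Xn n) → X))
              (restrictRel R (Xn n)) (restrictRel_equivalence hR (Xn n))) _
            (uniformTopology (μ.comap (Subtype.val : ↥(Xn n) → X))
              (fullGroup _ _ (restrictRel_equivalence hR (Xn n))))) →
          @ExtremelyAmenable ↥(fullGroup μ R hR) _
            (uniformTopology μ (fullGroup μ R hR)))) := by
  constructor
  · exact fun G _ _ h => prod_EA G h
  · intro X mX μ hprob R hR _hgen Xn hmeas hdisj hcover hinv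
    letI := mX
    haveI := hprob
    refine ⟨fgEquiv μ R hR Xn hmeas hdisj hcover hinv,
      fgEquiv_cont hmeas hdisj hcover hinv,
      fgEquiv_symm_cont hmeas hdisj hcover hinv, ?_⟩
    intro hEA
    letI : ∀ n, TopologicalSpace ↥(fullGroup (μ.comap (Subtype.val : ↥(Xn n) → X))
        (restrictRel R (Xn n)) (restrictRel_equivalence hR (Xn n))) := fun n =>
      uniformTopology (μ.comap (Subtype.val : ↥(Xn n) → X))
        (fullGroup _ _ (restrictRel_equivalence hR (Xn n)))
    exact EA_transfer _ _ (fgEquiv μ R hR Xn hmeas hdisj hcover hinv)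
      (fgEquiv_symm_cont hmeas hdisj hcover hinv)
      (prod_EA _ hEA)
end
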